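/- With N = p1^m and D_0, ..., D_{p1−1} as in the context: every a ∈ {0, 1, ..., N−1} has a unique representation a ≡ −i_a + p1^{m−1}·j_a (mod N) with 0 ≤ i_a ≤ p1^{m−1}−1 and 0 ≤ j_a ≤ p1−1; and if a, a' ∈ {0, 1, ..., N−1} satisfy j_a = j_{a'}, then for every k with 0 ≤ k ≤ p1−1, Σ_{x ∈ D_k} ψ(γ^a · x) = Σ_{x ∈ D_k} ψ(γ^{a'} · x). In other words, the character sum of ψ over γ^a·D_k depends only on j_a and k, not on i_a. -/

import Mathlib

open scoped Classical

noncomputable section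

private lemma aux_sq (p1 m n : ℕ) (hp1 : p1.Prime) (hgt : 3 < p1)
    (h2 : n ^ 2 ≡ 1 [MOD p1 ^ m]) (h1 : n ≡ 1 [MOD p1]) : n ≡ 1 [MOD p1 ^ m] := by
  have hd2 : ((p1 : ℤ) ^ m) ∣ ((n : ℤ) - 1) * ((n : ℤ) + 1) := by
    have h := (Nat.modEq_iff_dvd (n := p1 ^ m)).mp h2
    push_cast at h
    have he : ((n : ℤ) - 1) * ((n : ℤ) + 1) = -((1 : ℤ) - (n : ℤ) ^ 2) := by ring
    rw [he]
    exact dvd_neg.mpr h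
  have hd1 : (p1 : ℤ) ∣ (n : ℤ) - 1 := by
    have h := (Nat.modEq_iff_dvd (n := p1)).mp h1
    push_cast at h
    have he : (n : ℤ) - 1 = -((1 : ℤ) - (n : ℤ)) := by ring
    rw [he]
    exact dvd_neg.mpr h
  have hnd : ¬ (p1 : ℤ) ∣ ((n : ℤ) + 1) := by
    intro hdvd
    have h2' : (p1 : ℤ) ∣ 2 := by
      have he : (2 : ℤ) = ((n : ℤ) + 1) - ((n : ℤ) - 1) := by ring
      rw [he]
      exact dvd_sub hdvd hd1
    have := Int.le_of_dvd (by norm_num) h2'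
    omega
  have hcop : IsCoprime ((p1 : ℤ) ^ m) ((n : ℤ) + 1) :=
    IsCoprime.pow_left ((Prime.coprime_iff_not_dvd (Nat.prime_iff_prime_int.mp hp1)).mpr hnd)
  have hfin : ((p1 : ℤ) ^ m) ∣ (n : ℤ) - 1 := hcop.dvd_of_dvd_mul_right hd2
  rw [Nat.modEq_iff_dvd]
  push_cast
  have he : (1 : ℤ) - n = -((n : ℤ) - 1) := by ring
  rw [he]
  exact dvd_neg.mpr hfin

private lemma aux_exp (p1 m N p f : ℕ) (hp1 : p1.Prime) (hgt : 3 < p1)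
    (hm : 1 ≤ m) (hN : N = p1 ^ m) (hcop : Nat.Coprime p N)
    (hf : f = orderOf ((p : ZMod N))) (hf2 : 2 * f = N.totient)
    (s : ℕ) (hs1 : s ≡ 1 [MOD p1]) (hsN : Nat.Coprime s N) :
    ∃ e : ℕ, ((p : ZMod N)) ^ e = (s : ZMod N) := by
  have hN1 : 1 < N := by
    rw [hN]
    calc 1 < p1 := by omega
    _ = p1 ^ 1 := (pow_one p1).symm
    _ ≤ p1 ^ m := Nat.pow_le_pow_right (by omega) hm
  haveI : NeZero N := ⟨by omega⟩
  have hf0 : 0 < f := by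
    have := Nat.totient_pos.mpr (show 0 < N by omega)
    omega
  set g : (ZMod N)ˣ := ZMod.unitOfCoprime p hcop with hg
  set su : (ZMod N)ˣ := ZMod.unitOfCoprime s hsN with hsu
  have hgord : orderOf g = f := by
    rw [hf, ← ZMod.coe_unitOfCoprime p hcop, orderOf_units]
  have hsuv : (su : ZMod N) = (s : ZMod N) := ZMod.coe_unitOfCoprime s hsN
  set d := orderOf su with hd
  have hd0 : 0 < d := orderOf_pos su
  have hodd : ¬ 2 ∣ d := by
    intro h2
    set y := su ^ (d / 2) with hy
    have hy2 : y ^ 2 = 1 := by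
      rw [hy, ← pow_mul, Nat.div_mul_cancel h2, hd, pow_orderOf_eq_one]
    have hyn : y ≠ 1 := by
      intro h1'
      have hdvd := orderOf_dvd_of_pow_eq_one (show su ^ (d / 2) = 1 from h1')
      rw [← hd] at hdvd
      have := Nat.le_of_dvd (by omega) hdvd
      omega
    have hyval : (y : ZMod N) = ((s ^ (d / 2) : ℕ) : ZMod N) := by
      rw [hy, Units.val_pow_eq_pow_val, hsuv]
      push_cast
      ring
    have hymod : (s ^ (d / 2)) ^ 2 ≡ 1 [MOD N] := by
      have hcast : (((s ^ (d / 2)) ^ 2 : ℕ) : ZMod N) = ((1 : ℕ) : ZMod N) := by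
        push_cast
        have := congrArg (Units.val) hy2
        rw [Units.val_pow_eq_pow_val, Units.val_one, hyval] at this
        push_cast at this
        exact this
      exact (ZMod.natCast_eq_natCast_iff _ _ _).mp hcast
    have hymod1 : s ^ (d / 2) ≡ 1 [MOD p1] := by
      have := hs1.pow (d / 2)
      simpa using this
    have hfin : s ^ (d / 2) ≡ 1 [MOD N] := by
      rw [hN]
      rw [hN] at hymod
      exact aux_sq p1 m (s ^ (d / 2)) hp1 hgt hymod hymod1
    have : (y : ZMod N) = 1 := by
      rw [hyval]
      have := (ZMod.natCast_eq_natCast_iff _ _ _).mpr hfin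
      simpa using this
    exact hyn (Units.ext this)
  have h2d1 : 2 ∣ d + 1 := by omega
  obtain ⟨t, ht⟩ : ∃ t : (ZMod N)ˣ, t ^ 2 = su := by
    refine ⟨su ^ ((d + 1) / 2), ?_⟩
    rw [← pow_mul, Nat.div_mul_cancel h2d1, pow_succ, hd, pow_orderOf_eq_one, one_mul]
  have hcardG : Nat.card (ZMod N)ˣ = N.totient := by
    rw [Nat.card_eq_fintype_card, ZMod.card_units_eq_totient]
  set H := Subgroup.zpowers g with hH
  have hcardH : Nat.card H = f := by rw [hH, Nat.card_zpowers, hgord]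
  have hidx : H.index = 2 := by
    have h1 := Subgroup.index_mul_card H
    rw [hcardH, hcardG, ← hf2] at h1
    exact Nat.eq_of_mul_eq_mul_right hf0 h1
  have hmem : su ∈ H := by
    rw [← ht, ← hidx]
    exact Subgroup.pow_index_mem H t
  obtain ⟨z, hz⟩ := Subgroup.mem_zpowers_iff.mp hmem
  refine ⟨(z % (f : ℤ)).toNat, ?_⟩
  have hznn : 0 ≤ z % (f : ℤ) := Int.emod_nonneg z (by exact_mod_cast hf0.ne')
  have hge : g ^ ((z % (f : ℤ)).toNat) = su := by
    calc g ^ ((z % (f : ℤ)).toNat) = g ^ (((z % (f : ℤ)).toNat : ℤ)) := (zpow_natCast g _).symm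
    _ = g ^ (z % (f : ℤ)) := by rw [Int.toNat_of_nonneg hznn]
    _ = g ^ (z % ((orderOf g : ℕ) : ℤ)) := by rw [hgord]
    _ = g ^ z := zpow_mod_orderOf g z
    _ = su := hz
  have hval := congrArg (Units.val) hge
  rw [Units.val_pow_eq_pow_val] at hval
  rw [hg] at hval
  rw [ZMod.coe_unitOfCoprime] at hval
  rw [hval, hsu, ZMod.coe_unitOfCoprime]

private lemma aux_NT (p1 m N p f : ℕ) (hp1 : p1.Prime) (hgt : 3 < p1)
    (hm : 1 ≤ m) (hN : N = p1 ^ m) (hcop : Nat.Coprime p N)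
    (hf : f = orderOf ((p : ZMod N))) (hf2 : 2 * f = N.totient)
    (c : ℕ) (hc : ¬ p1 ^ (m - 1) ∣ c) :
    ∃ e : ℕ, p ^ e * c ≡ c + p1 ^ (m - 1) [MOD N] := by
  have hc0 : c ≠ 0 := by rintro rfl; exact hc (dvd_zero _)
  set v := c.factorization p1 with hv
  have hvu : p1 ^ v * (c / p1 ^ v) = c := Nat.ordProj_mul_ordCompl_eq_self c p1
  set u := c / p1 ^ v with hu
  have hpu : ¬ p1 ∣ u := Nat.not_dvd_ordCompl hp1 hc0
  have hpvc : p1 ^ v ∣ c := ⟨u, hvu.symm⟩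
  have hvm : v < m - 1 := by
    by_contra h
    exact hc (dvd_trans (pow_dvd_pow p1 (by omega)) hpvc)
  have hN1 : 1 < N := by
    rw [hN]
    calc 1 < p1 := by omega
    _ = p1 ^ 1 := (pow_one p1).symm
    _ ≤ p1 ^ m := Nat.pow_le_pow_right (by omega) hm
  have hup : Nat.Coprime u N := by
    rw [hN]
    exact Nat.Coprime.pow_right m ((hp1.coprime_iff_not_dvd).mpr hpu).symm
  obtain ⟨w, -, hw⟩ := Nat.exists_mul_mod_eq_one_of_coprime hup hN1
  have hww : u * w ≡ 1 [MOD N] := by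
    unfold Nat.ModEq
    rw [hw, Nat.mod_eq_of_lt hN1]
  set s := 1 + p1 ^ (m - 1 - v) * w with hs
  have hps : p1 ∣ p1 ^ (m - 1 - v) * w := Dvd.dvd.mul_right (dvd_pow_self p1 (by omega)) w
  have hs1 : s ≡ 1 [MOD p1] := by
    refine ((Nat.modEq_iff_dvd' (by omega)).mpr ?_).symm
    simpa [hs] using hps
  have hsp1 : ¬ p1 ∣ s := by
    intro hdvd
    rw [hs, Nat.add_comm] at hdvd
    have h1 : p1 ∣ 1 := (Nat.dvd_add_right hps).mp hdvd
    have := Nat.le_of_dvd (by omega) h1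
    omega
  have hsN : Nat.Coprime s N := by
    rw [hN]
    exact Nat.Coprime.pow_right m ((hp1.coprime_iff_not_dvd).mpr hsp1).symm
  obtain ⟨e, he⟩ := aux_exp p1 m N p f hp1 hgt hm hN hcop hf hf2 s hs1 hsN
  have hpe : p ^ e ≡ s [MOD N] :=
    (ZMod.natCast_eq_natCast_iff _ _ _).mp (by rw [Nat.cast_pow, he])
  have hpow : p1 ^ (m - 1 - v) * p1 ^ v = p1 ^ (m - 1) := by
    rw [← pow_add]
    congr 1
    omega
  have hkey : s * c = c + p1 ^ (m - 1) * (u * w) := by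
    rw [hs, ← hvu, ← hpow]
    ring
  refine ⟨e, ?_⟩
  calc p ^ e * c ≡ s * c [MOD N] := hpe.mul_right c
  _ = c + p1 ^ (m - 1) * (u * w) := hkey
  _ ≡ c + p1 ^ (m - 1) * 1 [MOD N] := Nat.ModEq.add_left c (hww.mul_left _)
  _ = c + p1 ^ (m - 1) := by ring


private lemma aux_unique (p1 m N : ℕ) (hp1 : p1.Prime) (hm : 1 ≤ m) (hN : N = p1 ^ m)
    (i j i' j' : ℕ) (hi : i < p1 ^ (m - 1)) (hj : j < p1) (hi' : i' < p1 ^ (m - 1)) (hj' : j' < p1)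
    (h : -((i : ℕ) : ZMod N) + ((p1 ^ (m - 1) * j : ℕ) : ZMod N)
       = -((i' : ℕ) : ZMod N) + ((p1 ^ (m - 1) * j' : ℕ) : ZMod N)) :
    i = i' ∧ j = j' := by
  set M := p1 ^ (m - 1) with hM
  have hMN : M * p1 = N := by
    rw [hN, hM, ← pow_succ]
    congr 1
    omega
  have hM0 : 0 < M := Nat.pow_pos hp1.pos
  have hint : ((-(i : ℤ) + ((M : ℤ) * j) : ℤ) : ZMod N) = ((-(i' : ℤ) + ((M : ℤ) * j') : ℤ) : ZMod N) := by
    push_cast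
    push_cast at h
    exact h
  have hdvd : (N : ℤ) ∣ (-(i' : ℤ) + (M : ℤ) * j') - (-(i : ℤ) + (M : ℤ) * j) :=
    Int.ModEq.dvd ((ZMod.intCast_eq_intCast_iff _ _ _).mp hint)
  have hMdvdN : (M : ℤ) ∣ (N : ℤ) := by
    exact_mod_cast (⟨p1, hMN.symm⟩ : (M : ℕ) ∣ N)
  have h1 : (M : ℤ) ∣ ((i : ℤ) - i') := by
    have h2 : (M : ℤ) ∣ (-(i' : ℤ) + (M : ℤ) * j') - (-(i : ℤ) + (M : ℤ) * j) :=
      dvd_trans hMdvdN hdvd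
    have h3 : (i : ℤ) - i' = ((-(i' : ℤ) + (M : ℤ) * j') - (-(i : ℤ) + (M : ℤ) * j)) - (M : ℤ) * j' + (M : ℤ) * j := by
      ring
    rw [h3]
    exact dvd_add (dvd_sub h2 (dvd_mul_right _ _)) (dvd_mul_right _ _)
  have hii : i = i' := by
    have hz := Int.eq_zero_of_abs_lt_dvd h1 (by
      rw [abs_lt]
      constructor <;> omega)
    omega
  refine ⟨hii, ?_⟩
  have h4 : (N : ℤ) ∣ (M : ℤ) * ((j' : ℤ) - j) := by
    have h5 : (M : ℤ) * ((j' : ℤ) - j) = ((-(i' : ℤ) + (M : ℤ) * j') - (-(i : ℤ) + (M : ℤ) * j)) + ((i' : ℤ) - i) := by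
      ring
    rw [h5, show (i' : ℤ) - i = 0 by omega]
    simpa using hdvd
  rw [← hMN] at h4
  push_cast at h4
  have h6 : (p1 : ℤ) ∣ (j' : ℤ) - j :=
    (mul_dvd_mul_iff_left (show (M : ℤ) ≠ 0 by exact_mod_cast hM0.ne')).mp h4
  have hz := Int.eq_zero_of_abs_lt_dvd h6 (by
    rw [abs_lt]
    constructor <;> omega)
  omega


private def auxPsi (p : ℕ) (F : Type) [Field F] [Fintype F] [Algebra (ZMod p) F] (y : F) : ℂ :=
  Complex.exp (2 * (Real.pi : ℂ) * Complex.I *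
    ((Algebra.trace (ZMod p) F y).val : ℂ) / (p : ℂ))

private def auxC (N : ℕ) (F : Type) [Field F] [Fintype F] (γ : Fˣ) : Finset F :=
  (Set.toFinite {x : F | ∃ t : ℕ, x = ((γ : F)) ^ (N * t)}).toFinset

private lemma mem_auxC (N : ℕ) (F : Type) [Field F] [Fintype F] (γ : Fˣ) (x : F) :
    x ∈ auxC N F γ ↔ ∃ t : ℕ, x = ((γ : F)) ^ (N * t) := by
  simp [auxC, Set.Finite.mem_toFinset, Set.mem_setOf_eq]

private def auxT (p N : ℕ) (F : Type) [Field F] [Fintype F] [Algebra (ZMod p) F]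
    (γ : Fˣ) (c : ℕ) : ℂ :=
  ∑ x ∈ auxC N F γ, auxPsi p F (((γ : F)) ^ c * x)

private lemma aux_trace_frob (p : ℕ) (hp : p.Prime) (F : Type) [Field F] [Fintype F]
    [Algebra (ZMod p) F] (y : F) :
    Algebra.trace (ZMod p) F (y ^ p) = Algebra.trace (ZMod p) F y := by
  haveI : Fact p.Prime := ⟨hp⟩
  haveI : CharP F p := charP_of_injective_algebraMap (algebraMap (ZMod p) F).injective p
  haveI : ExpChar F p := ExpChar.prime hp
  let φ : F →ₐ[ZMod p] F :=
    { toRingHom := frobenius F p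
      commutes' := fun r => by
        show frobenius F p _ = _
        rw [frobenius_def, ← map_pow, ZMod.pow_card] }
  have hbij : Function.Bijective φ := Finite.injective_iff_bijective.mp (frobenius_inj F p)
  let σ : F ≃ₐ[ZMod p] F := AlgEquiv.ofBijective φ hbij
  have h1 : σ y = y ^ p := rfl
  rw [← h1]
  exact Algebra.trace_eq_of_algEquiv σ y

private lemma auxPsi_frob (p : ℕ) (hp : p.Prime) (F : Type) [Field F] [Fintype F]
    [Algebra (ZMod p) F] (y : F) : auxPsi p F (y ^ p) = auxPsi p F y := by
  unfold auxPsi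
  rw [aux_trace_frob p hp]

private lemma auxT_per (p N : ℕ) (F : Type) [Field F] [Fintype F] [Algebra (ZMod p) F]
    (γ : Fˣ) (n0 : ℕ) (hn0 : 1 ≤ n0) (hγ1 : ((γ : F)) ^ (N * n0) = 1) (c : ℕ) :
    auxT p N F γ (c + N) = auxT p N F γ c := by
  unfold auxT
  refine Finset.sum_nbij' (fun x => ((γ : F)) ^ N * x)
    (fun x => ((γ : F)) ^ (N * (n0 - 1)) * x) ?_ ?_ ?_ ?_ ?_
  · intro a ha
    rw [mem_auxC] at ha ⊢
    obtain ⟨t, rfl⟩ := ha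
    refine ⟨1 + t, ?_⟩
    rw [← pow_add]
    congr 1
    ring
  · intro a ha
    rw [mem_auxC] at ha ⊢
    obtain ⟨t, rfl⟩ := ha
    refine ⟨n0 - 1 + t, ?_⟩
    rw [← pow_add]
    congr 1
    ring
  · intro a _
    rw [← mul_assoc, ← pow_add,
      show N * (n0 - 1) + N = N * n0 by rw [← Nat.mul_succ]; congr 1; omega, hγ1, one_mul]
  · intro a _
    rw [← mul_assoc, ← pow_add,
      show N + N * (n0 - 1) = N * n0 by rw [Nat.add_comm, ← Nat.mul_succ]; congr 1; omega,
      hγ1, one_mul]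
  · intro a _
    congr 1
    rw [pow_add, mul_assoc]

private lemma auxT_frob (p N : ℕ) (hp : p.Prime) (F : Type) [Field F] [Fintype F]
    [Algebra (ZMod p) F] (γ : Fˣ) (f : ℕ) (hf : 1 ≤ f) (hq : Fintype.card F = p ^ f)
    (c : ℕ) : auxT p N F γ (p * c) = auxT p N F γ c := by
  have hcard : ∀ x : F, x ^ (p ^ f) = x := by
    intro x
    rw [← hq]
    exact FiniteField.pow_card x
  have hpf : p * p ^ (f - 1) = p ^ f := by
    rw [← pow_succ']
    congr 1
    omega
  refine (Finset.sum_nbij' (fun x => x ^ p) (fun x => x ^ (p ^ (f - 1))) ?_ ?_ ?_ ?_ ?_).symm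
  · intro a ha
    rw [mem_auxC] at ha ⊢
    obtain ⟨t, rfl⟩ := ha
    refine ⟨t * p, ?_⟩
    rw [← pow_mul]
    congr 1
    ring
  · intro a ha
    rw [mem_auxC] at ha ⊢
    obtain ⟨t, rfl⟩ := ha
    refine ⟨t * p ^ (f - 1), ?_⟩
    rw [← pow_mul]
    congr 1
    ring
  · intro a _
    rw [← pow_mul, show p * p ^ (f - 1) = p ^ f by rw [← pow_succ']; congr 1; omega]
    exact hcard a
  · intro a _
    rw [← pow_mul, show p ^ (f - 1) * p = p ^ f by rw [← pow_succ]; congr 1; omega]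
    exact hcard a
  · intro a _
    have harg : ((γ : F)) ^ (p * c) * a ^ p = (((γ : F)) ^ c * a) ^ p := by
      rw [mul_pow, ← pow_mul, mul_comm c p]
    rw [harg, auxPsi_frob p hp]


private lemma auxT_mod (p N : ℕ) (F : Type) [Field F] [Fintype F] [Algebra (ZMod p) F]
    (γ : Fˣ) (n0 : ℕ) (hn0 : 1 ≤ n0) (hγ1 : ((γ : F)) ^ (N * n0) = 1) (hN0 : 0 < N)
    (c c' : ℕ) (h : c ≡ c' [MOD N]) : auxT p N F γ c = auxT p N F γ c' := by
  have hmul : ∀ x t : ℕ, auxT p N F γ (x + N * t) = auxT p N F γ x := by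
    intro x t
    induction t with
    | zero => simp
    | succ t ih =>
      rw [show x + N * (t + 1) = (x + N * t) + N by ring, auxT_per p N F γ n0 hn0 hγ1, ih]
  have h1 : auxT p N F γ c = auxT p N F γ (c % N) := by
    conv_lhs => rw [show c = c % N + N * (c / N) from (Nat.mod_add_div c N).symm]
    exact hmul _ _
  have h2 : auxT p N F γ c' = auxT p N F γ (c' % N) := by
    conv_lhs => rw [show c' = c' % N + N * (c' / N) from (Nat.mod_add_div c' N).symm]
    exact hmul _ _
  rw [h1, h2, h]

private lemma auxT_frobpow (p N : ℕ) (hp : p.Prime) (F : Type) [Field F] [Fintype F]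
    [Algebra (ZMod p) F] (γ : Fˣ) (f : ℕ) (hf : 1 ≤ f) (hq : Fintype.card F = p ^ f)
    (e c : ℕ) : auxT p N F γ (p ^ e * c) = auxT p N F γ c := by
  induction e with
  | zero => simp
  | succ e ih =>
    rw [show p ^ (e + 1) * c = p * (p ^ e * c) by ring, auxT_frob p N hp F γ f hf hq, ih]

set_option maxHeartbeats 1000000 in
/-- For `N = p1^m`, every `a` has a unique representation
`a ≡ -i_a + p1^(m-1)*j_a (mod N)`, and the additive character sum of `ψ` over
`γ^a * D_k` depends only on `j_a` and `k`, not on `i_a`. -/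
theorem char_sum_indep_prime_power
    (p1 m N p f q : ℕ)
    (hp1 : p1.Prime) (hp1_gt : 3 < p1) (hp1_mod : p1 % 4 = 3)
    (hm : 1 ≤ m) (hN : N = p1 ^ m)
    (hp : p.Prime) (hcop : Nat.Coprime p N)
    (hf : f = orderOf (p : ZMod N)) (hf2 : 2 * f = N.totient)
    (hq : q = p ^ f)
    (F : Type) [Field F] [Fintype F] [Algebra (ZMod p) F]
    (hF : Fintype.card F = q)
    (γ : Fˣ) (hγ : orderOf γ = q - 1)
    (D : ℕ → Set F)
    (hD : ∀ k, D k = {x : F | ∃ i < p1 ^ (m - 1), ∃ t : ℕ,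
        x = ((γ : F)) ^ (i + k * p1 ^ (m - 1) + N * t)}) :
    (∀ a < N, ∃! ij : ℕ × ℕ, (ij.1 < p1 ^ (m - 1) ∧ ij.2 < p1) ∧
        (a : ZMod N) = -((ij.1 : ℕ) : ZMod N) + ((p1 ^ (m - 1) * ij.2 : ℕ) : ZMod N)) ∧
    (∀ a a' : ℕ, a < N → a' < N →
      ∀ i i' j : ℕ, i < p1 ^ (m - 1) → i' < p1 ^ (m - 1) → j < p1 →
        (a : ZMod N) = -((i : ℕ) : ZMod N) + ((p1 ^ (m - 1) * j : ℕ) : ZMod N) →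
        (a' : ZMod N) = -((i' : ℕ) : ZMod N) + ((p1 ^ (m - 1) * j : ℕ) : ZMod N) →
        ∀ k < p1,
          ∑ x ∈ (Set.toFinite (D k)).toFinset,
            Complex.exp (2 * (Real.pi : ℂ) * Complex.I *
              ((Algebra.trace (ZMod p) F ((γ : F) ^ a * x)).val : ℂ) / (p : ℂ)) =
          ∑ x ∈ (Set.toFinite (D k)).toFinset,
            Complex.exp (2 * (Real.pi : ℂ) * Complex.I *
              ((Algebra.trace (ZMod p) F ((γ : F) ^ a' * x)).val : ℂ) / (p : ℂ))) := by
  set M := p1 ^ (m - 1) with hM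
  have hM0 : 0 < M := Nat.pow_pos hp1.pos
  have hMN : M * p1 = N := by rw [hN, hM, ← pow_succ]; congr 1; omega
  have hN0 : 0 < N := by
    have : 0 < M * p1 := Nat.mul_pos hM0 hp1.pos
    omega
  have hMleN : M ≤ N := by
    calc M = M * 1 := (Nat.mul_one M).symm
    _ ≤ M * p1 := Nat.mul_le_mul_left M hp1.one_lt.le
    _ = N := hMN
  constructor
  · -- Part 1 : existence and uniqueness
    intro a ha
    have hex : ∃ i1 j1 : ℕ, i1 < M ∧ j1 < p1 ∧
        (a : ZMod N) = -((i1 : ℕ) : ZMod N) + ((M * j1 : ℕ) : ZMod N) := by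
      by_cases hr : a % M = 0
      · refine ⟨0, a / M, hM0, ?_, ?_⟩
        · rw [Nat.div_lt_iff_lt_mul hM0, mul_comm, hMN]
          exact ha
        · rw [Nat.cast_zero, neg_zero, zero_add]
          congr 1
          exact (Nat.mul_div_cancel' (Nat.dvd_of_mod_eq_zero hr)).symm
      · have hlt : a % M < M := Nat.mod_lt _ hM0
        refine ⟨M - a % M, (a / M + 1) % p1, by omega, Nat.mod_lt _ hp1.pos, ?_⟩
        rw [eq_neg_add_iff_add_eq, ← Nat.cast_add, ZMod.natCast_eq_natCast_iff]
        have h1 : (M - a % M) + a = M * (a / M + 1) := by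
          have hdm : M * (a / M) + a % M = a := Nat.div_add_mod a M
          calc (M - a % M) + a = (M - a % M) + (M * (a / M) + a % M) := by rw [hdm]
          _ = M * (a / M) + ((M - a % M) + a % M) := by ring
          _ = M * (a / M) + M := by rw [Nat.sub_add_cancel (le_of_lt hlt)]
          _ = M * (a / M + 1) := by ring
        rw [h1]
        have h2 : (a / M + 1) % p1 ≡ a / M + 1 [MOD p1] := Nat.mod_modEq _ _
        have h3 := Nat.ModEq.mul_left' (c := M) h2
        rw [hMN] at h3
        exact h3.symm
    obtain ⟨i1, j1, hi1, hj1, heq1⟩ := hex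
    refine ⟨(i1, j1), ⟨⟨hi1, hj1⟩, heq1⟩, ?_⟩
    rintro ⟨i2, j2⟩ ⟨⟨hi2, hj2⟩, heq2⟩
    have huniq := aux_unique p1 m N hp1 hm hN i2 j2 i1 j1 hi2 hj2 hi1 hj1
      (heq2.symm.trans heq1)
    exact Prod.ext huniq.1 huniq.2
  · -- Part 2
    intro a a' ha ha' i i' j hi hi' hj heqa heqa' k hk
    have hN1 : 1 < N := by
      have : 4 ≤ p1 := by omega
      calc 1 < 1 * 4 := by omega
      _ ≤ M * p1 := Nat.mul_le_mul hM0 this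
      _ = N := hMN
    have hf0 : 0 < f := by
      have := Nat.totient_pos.mpr hN0
      omega
    have hq1 : 1 < q := by
      rw [hq]
      calc 1 < p := hp.one_lt
      _ = p ^ 1 := (pow_one p).symm
      _ ≤ p ^ f := Nat.pow_le_pow_right hp.pos hf0
    have hNf : ((p : ZMod N)) ^ f = 1 := by rw [hf]; exact pow_orderOf_eq_one _
    have hmodq : p ^ f ≡ 1 [MOD N] := by
      refine (ZMod.natCast_eq_natCast_iff _ _ _).mp ?_
      push_cast
      rw [hNf]
    have hNq : N ∣ q - 1 := by
      rw [hq]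
      exact (Nat.modEq_iff_dvd' (Nat.one_le_pow _ _ hp.pos)).mp hmodq.symm
    set n0 := (q - 1) / N with hn0def
    have hn0N : N * n0 = q - 1 := Nat.mul_div_cancel' hNq
    have hn01 : 1 ≤ n0 := by
      rcases Nat.eq_zero_or_pos n0 with h | h
      · rw [h, Nat.mul_zero] at hn0N
        omega
      · exact h
    have hγ1 : ((γ : F)) ^ (N * n0) = 1 := by
      rw [hn0N]
      have h := pow_orderOf_eq_one γ
      rw [hγ] at h
      have h2 := congrArg (Units.val) h
      rw [Units.val_pow_eq_pow_val, Units.val_one] at h2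
      exact h2
    -- decomposition of the sum over D k
    have hsum : ∀ b : ℕ,
        (∑ x ∈ (Set.toFinite (D k)).toFinset,
          Complex.exp (2 * (Real.pi : ℂ) * Complex.I *
            ((Algebra.trace (ZMod p) F ((γ : F) ^ b * x)).val : ℂ) / (p : ℂ)))
        = ∑ i2 ∈ Finset.range M, auxT p N F γ (b + (i2 + k * M)) := by
      intro b
      have hDk : (Set.toFinite (D k)).toFinset
          = (Finset.range M).biUnion
            (fun i2 => (auxC N F γ).image (fun x => ((γ : F)) ^ (i2 + k * M) * x)) := by
        ext x
        simp only [Set.Finite.mem_toFinset, hD k, Set.mem_setOf_eq, Finset.mem_biUnion,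
          Finset.mem_range, Finset.mem_image, mem_auxC]
        constructor
        · rintro ⟨i2, hi2, t, rfl⟩
          exact ⟨i2, hi2, ((γ : F)) ^ (N * t), ⟨t, rfl⟩, by rw [← pow_add]⟩
        · rintro ⟨i2, hi2, y, ⟨t, rfl⟩, rfl⟩
          exact ⟨i2, hi2, t, by rw [← pow_add]⟩
      have hdisj : Set.PairwiseDisjoint ↑(Finset.range M)
          (fun i2 => (auxC N F γ).image (fun x => ((γ : F)) ^ (i2 + k * M) * x)) := by
        intro x hx y hy hxy
        simp only [Finset.coe_range, Set.mem_Iio] at hx hy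
        rw [Function.onFun, Finset.disjoint_left]
        intro z hz1 hz2
        simp only [Finset.mem_image, mem_auxC] at hz1 hz2
        obtain ⟨_, ⟨t, rfl⟩, hzx⟩ := hz1
        obtain ⟨_, ⟨t', rfl⟩, hzy⟩ := hz2
        have h1 : ((γ : F)) ^ (x + k * M + N * t) = ((γ : F)) ^ (y + k * M + N * t') := by
          rw [pow_add ((γ : F)) (x + k * M) (N * t), pow_add ((γ : F)) (y + k * M) (N * t')]
          exact hzx.trans hzy.symm
        have h2 : γ ^ (x + k * M + N * t) = γ ^ (y + k * M + N * t') := by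
          apply Units.ext
          rw [Units.val_pow_eq_pow_val, Units.val_pow_eq_pow_val]
          exact h1
        have h3 := (pow_eq_pow_iff_modEq).mp h2
        rw [hγ] at h3
        have h4 : x + k * M + N * t ≡ y + k * M + N * t' [MOD N] := h3.of_dvd hNq
        have e1 : x + k * M + N * t ≡ x + k * M [MOD N] := by
          have h0 : N * t ≡ 0 [MOD N] := (Nat.modEq_zero_iff_dvd).mpr ⟨t, rfl⟩
          simpa using Nat.ModEq.add_left (x + k * M) h0
        have e2 : y + k * M + N * t' ≡ y + k * M [MOD N] := by
          have h0 : N * t' ≡ 0 [MOD N] := (Nat.modEq_zero_iff_dvd).mpr ⟨t', rfl⟩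
          simpa using Nat.ModEq.add_left (y + k * M) h0
        have h5 : x + k * M ≡ y + k * M [MOD N] := (e1.symm.trans h4).trans e2
        have h6 : x ≡ y [MOD N] := Nat.ModEq.add_right_cancel' _ h5
        have h7 : x = y := by
          have hxN : x % N = x := Nat.mod_eq_of_lt (lt_of_lt_of_le hx hMleN)
          have hyN : y % N = y := Nat.mod_eq_of_lt (lt_of_lt_of_le hy hMleN)
          unfold Nat.ModEq at h6
          omega
        exact hxy h7
      rw [hDk, Finset.sum_biUnion hdisj]
      apply Finset.sum_congr rfl
      intro i2 _
      rw [Finset.sum_image (by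
        intro x _ y _ hxy
        exact mul_left_cancel₀ (pow_ne_zero _ (Units.ne_zero γ)) hxy)]
      unfold auxT auxPsi
      apply Finset.sum_congr rfl
      intro x _
      have harg : ((γ : F)) ^ b * (((γ : F)) ^ (i2 + k * M) * x) = ((γ : F)) ^ (b + (i2 + k * M)) * x := by
        rw [← mul_assoc, ← pow_add]
      rw [harg]
    set B := M * j + k * M with hB
    have hWa : ∀ b ia : ℕ, ia < M →
        (b : ZMod N) = -((ia : ℕ) : ZMod N) + ((M * j : ℕ) : ZMod N) →
        (∑ x ∈ (Set.toFinite (D k)).toFinset,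
          Complex.exp (2 * (Real.pi : ℂ) * Complex.I *
            ((Algebra.trace (ZMod p) F ((γ : F) ^ b * x)).val : ℂ) / (p : ℂ)))
        = ∑ i2 ∈ Finset.range M, auxT p N F γ (((N - ia) + B) + i2) := by
      intro b ia hia heqb
      rw [hsum b]
      have hbmod : b ≡ (N - ia) + M * j [MOD N] := by
        refine (ZMod.natCast_eq_natCast_iff _ _ _).mp ?_
        rw [heqb]
        push_cast [Nat.cast_sub (le_of_lt (lt_of_lt_of_le hia hMleN))]
        rw [ZMod.natCast_self]
        ring
      apply Finset.sum_congr rfl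
      intro i2 _
      have hmq : b + (i2 + k * M) ≡ ((N - ia) + B) + i2 [MOD N] := by
        have h := hbmod.add_right (i2 + k * M)
        rw [show (N - ia) + M * j + (i2 + k * M) = ((N - ia) + (M * j + k * M)) + i2 by ring] at h
        rw [hB]
        exact h
      exact auxT_mod p N F γ n0 hn01 hγ1 hN0 _ _ hmq
    have hwin : ∀ s, s < M →
        (∑ i2 ∈ Finset.range M, auxT p N F γ (((N - s) + B) + i2))
        = ∑ i2 ∈ Finset.range M, auxT p N F γ (((N - 0) + B) + i2) := by
      intro s
      induction s with
      | zero => intro _; rfl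
      | succ s ih =>
        intro hs
        rw [← ih (by omega)]
        obtain ⟨M', hM'⟩ : ∃ M', M = M' + 1 := ⟨M - 1, by omega⟩
        have hMdvdN : M ∣ N := ⟨p1, hMN.symm⟩
        have hMdvdB : M ∣ B := ⟨j + k, by rw [hB]; ring⟩
        have hc0dvd : ¬ M ∣ ((N - (s + 1)) + B) := by
          intro hdvd
          have hd3 : M ∣ N - (s + 1) := by
            have := Nat.dvd_sub hdvd hMdvdB
            simpa using this
          have hd4 : M ∣ s + 1 := by
            have h9 : N - (N - (s + 1)) = s + 1 := by omega
            rw [← h9]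
            exact Nat.dvd_sub hMdvdN hd3
          have := Nat.le_of_dvd (by omega) hd4
          omega
        set c0 := (N - (s + 1)) + B with hc0def
        have hTc0 : auxT p N F γ c0 = auxT p N F γ (c0 + M) := by
          obtain ⟨e, he⟩ := aux_NT p1 m N p f hp1 hp1_gt hm hN hcop hf hf2 c0 hc0dvd
          calc auxT p N F γ c0 = auxT p N F γ (p ^ e * c0) :=
            (auxT_frobpow p N hp F γ f hf0 (hF.trans hq) e c0).symm
          _ = auxT p N F γ (c0 + M) := by
            refine auxT_mod p N F γ n0 hn01 hγ1 hN0 _ _ ?_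
            rw [hM]
            exact he
        rw [hM']
        rw [Finset.sum_range_succ', Finset.sum_range_succ]
        congr 1
        · apply Finset.sum_congr rfl
          intro x _
          congr 1
          omega
        · rw [show ((N - s) + B) + M' = c0 + M by rw [hc0def]; omega, add_zero]
          exact hTc0
    have hend1 := hWa a i hi heqa
    have hend2 := hWa a' i' hi' heqa'
    rw [hend1, hend2, hwin i hi, hwin i' hi']
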